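/- Let n ≥ 1, z : Fin n → ℝ, and fix an index i. For every τ > 0, the function τ ↦ softmaxτ(z, τ)_i has derivative at τ equal to softmaxτ(z, τ)_i · (m(τ) − z i) / τ², where m(τ) = ∑_j softmaxτ(z, τ)_j · z_j is the softmax-weighted mean of the logits (a HasDerivAt statement). -/

import Mathlib

open Real Set

/-- Tempered softmax of logits `z` at temperature `τ`. -/
noncomputable def softmaxT {n : ℕ} (z : Fin n → ℝ) (τ : ℝ) (i : Fin n) : ℝ :=
  Real.exp (z i / τ) / ∑ j, Real.exp (z j / τ)

theorem softmaxT_hasDerivAt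
    (n : ℕ) (hn : 1 ≤ n) (z : Fin n → ℝ) (i : Fin n) (τ : ℝ) (hτ : 0 < τ) :
    HasDerivAt (fun t => softmaxT z t i)
      (softmaxT z τ i * ((∑ j, softmaxT z τ j * z j) - z i) / τ ^ 2) τ := by
  have hτ0 : τ ≠ 0 := hτ.ne'
  have hE : ∀ j : Fin n, HasDerivAt (fun t : ℝ => Real.exp (z j / t))
      (Real.exp (z j / τ) * (z j * (-(τ ^ 2)⁻¹))) τ := by
    intro j
    have h1 : HasDerivAt (fun t : ℝ => z j / t) (z j * (-(τ ^ 2)⁻¹)) τ := by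
      simpa [div_eq_mul_inv] using ((hasDerivAt_inv hτ0).const_mul (z j))
    exact h1.exp
  have hS : HasDerivAt (fun t : ℝ => ∑ j, Real.exp (z j / t))
      (∑ j, Real.exp (z j / τ) * (z j * (-(τ ^ 2)⁻¹))) τ :=
    HasDerivAt.fun_sum fun j _ => hE j
  have hSpos : (0:ℝ) < ∑ j, Real.exp (z j / τ) :=
    Finset.sum_pos (fun j _ => Real.exp_pos _)
      (Finset.univ_nonempty_iff.mpr (Fin.pos_iff_nonempty.mp hn))
  have hSne : (∑ j, Real.exp (z j / τ)) ≠ 0 := hSpos.ne'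
  have : HasDerivAt (fun t => softmaxT z t i) _ τ :=
    (hE i).fun_div hS hSne
  convert this using 1
  unfold softmaxT
  have h1 : ∀ j : Fin n, Real.exp (z j / τ) / (∑ k, Real.exp (z k / τ)) * z j
      = Real.exp (z j / τ) * z j / (∑ k, Real.exp (z k / τ)) := fun j => by ring
  have h2 : ∀ j : Fin n, Real.exp (z j / τ) * (z j * (-(τ ^ 2)⁻¹))
      = Real.exp (z j / τ) * z j * (-(τ ^ 2)⁻¹) := fun j => by ring
  simp only [h1, h2, ← Finset.sum_div, ← Finset.sum_mul]
  set S := ∑ j, Real.exp (z j / τ)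
  set M := ∑ j, Real.exp (z j / τ) * z j
  field_simp
  ring
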